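/- Let F be a field containing a primitive n-th root of unity ω, let F_n be the Fourier matrix with rows e_0, …, e_{n−1}, and let a, k be integers with gcd(k, n) = 1 and 1 ≤ r ≤ n. Then the code generated by the r rows e_{a mod n}, e_{(a+k) mod n}, …, e_{(a+(r−1)k) mod n} (indices taken modulo n) is an [n, r, n−r+1] MDS code. -/

import Mathlib

/-- Let `ω` be a primitive `n`-th root of unity in `F`, and `a, k` with
`gcd(k, n) = 1`. The code generated by the `r` Fourier-matrix rows
`e_{(a + j*k) mod n}` for `j = 0, …, r-1` is an `[n, r, n - r + 1]` MDS code. -/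
theorem stmt_11 {F : Type*} [Field F] [DecidableEq F] {n r : ℕ}
    (hr1 : 1 ≤ r) (hrn : r ≤ n) (ω : F) (hω : IsPrimitiveRoot ω n)
    (a k : ℕ) (hk : Nat.gcd k n = 1)
    (A : Matrix (Fin r) (Fin n) F)
    (hA : ∀ (j : Fin r) (t : Fin n), A j t = ω ^ ((((a + (j : ℕ) * k) % n)) * (t : ℕ))) :
    Module.finrank F (Submodule.span F (Set.range A)) = r ∧
    (∀ c ∈ Submodule.span F (Set.range A), c ≠ 0 → n - r + 1 ≤ hammingNorm c) ∧
    (∃ c ∈ Submodule.span F (Set.range A), c ≠ 0 ∧ hammingNorm c = n - r + 1) := by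
  classical
  have hn : 0 < n := lt_of_lt_of_le hr1 hrn
  have hω0 : ω ≠ 0 := hω.ne_zero hn.ne'
  set ω' := ω ^ k with hω'def
  have hω' : IsPrimitiveRoot ω' n := hω.pow_of_coprime k hk
  have horder : orderOf ω = n := hω.eq_orderOf.symm
  -- polynomial attached to a coefficient vector
  set Q : (Fin r → F) → Polynomial F :=
    fun v => ∑ j : Fin r, Polynomial.monomial (j : ℕ) (v j) with hQ
  have hQcoeff : ∀ (v : Fin r → F) (m : ℕ),
      (Q v).coeff m = if h : m < r then v ⟨m, h⟩ else 0 := by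
    intro v m
    rw [hQ, Polynomial.finset_sum_coeff]
    split_ifs with h
    · rw [Finset.sum_eq_single (⟨m, h⟩ : Fin r)]
      · simp
      · intro j _ hj
        rw [Polynomial.coeff_monomial, if_neg]
        intro hc; exact hj (by ext; simpa using hc)
      · simp
    · apply Finset.sum_eq_zero
      intro j _
      rw [Polynomial.coeff_monomial, if_neg]
      intro hc; omega
  have hQdeg : ∀ v : Fin r → F, (Q v).natDegree ≤ r - 1 := by
    intro v
    refine (Polynomial.natDegree_sum_le _ _).trans ?_
    refine (Finset.fold_max_le _).mpr ⟨by omega, ?_⟩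
    intro j _
    exact (Polynomial.natDegree_monomial_le _).trans (by omega)
  have hQeval : ∀ (v : Fin r → F) (x : F),
      (Q v).eval x = ∑ j : Fin r, v j * x ^ (j : ℕ) := by
    intro v x
    rw [hQ, Polynomial.eval_finset_sum]
    simp [Polynomial.eval_monomial]
  -- the key formula
  have key : ∀ (v : Fin r → F) (t : Fin n),
      A.vecMul v t = ω ^ (a * (t : ℕ)) * (Q v).eval (ω' ^ (t : ℕ)) := by
    intro v t
    rw [hQeval]
    rw [Matrix.vecMul, dotProduct]
    rw [Finset.mul_sum]
    refine Finset.sum_congr rfl ?_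
    intro j _
    rw [hA]
    have h1 : ω ^ (((a + (j : ℕ) * k) % n) * (t : ℕ))
        = ω ^ ((a + (j : ℕ) * k) * (t : ℕ)) := by
      rw [pow_mul, pow_mul]
      congr 1
      conv_rhs => rw [← pow_mod_orderOf]
      rw [horder]
    rw [h1, hω'def, ← pow_mul, ← pow_mul]
    rw [show (a + (j : ℕ) * k) * (t : ℕ)
      = a * (t : ℕ) + k * ((t : ℕ) * (j : ℕ)) by ring, pow_add]
    ring
  -- zero set cardinality bound
  have hnorm : ∀ c : Fin n → F,
      hammingNorm c = n - (Finset.univ.filter (fun t => c t = 0)).card := by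
    intro c
    have := Finset.card_filter_add_card_filter_not
      (s := (Finset.univ : Finset (Fin n))) (p := fun t => c t = 0)
    simp only [Finset.card_univ, Fintype.card_fin] at this
    have h2 : hammingNorm c = (Finset.univ.filter (fun t => ¬ c t = 0)).card := by
      simp [hammingNorm]
    omega
  have hzero : ∀ (v : Fin r → F) (t : Fin n),
      A.vecMul v t = 0 ↔ (Q v).eval (ω' ^ (t : ℕ)) = 0 := by
    intro v t
    rw [key]
    constructor
    · intro h
      rcases mul_eq_zero.mp h with h | h
      · exact absurd h (pow_ne_zero _ hω0)
      · exact h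
    · intro h; rw [h, mul_zero]
  have hroots : ∀ v : Fin r → F, Q v ≠ 0 →
      (Finset.univ.filter (fun t : Fin n => A.vecMul v t = 0)).card ≤ (Q v).natDegree := by
    intro v hv
    have h1 : (Finset.univ.filter (fun t : Fin n => A.vecMul v t = 0)).card
        ≤ (Q v).roots.toFinset.card := by
      refine Finset.card_le_card_of_injOn (fun t => ω' ^ (t : ℕ)) ?_ ?_
      · intro t ht
        simp only [Finset.coe_filter, Finset.mem_coe, Finset.mem_filter, Set.mem_setOf_eq] at ht ⊢
        rw [Multiset.mem_toFinset, Polynomial.mem_roots hv]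
        exact ((hzero v t).mp ht.2)
      · intro t1 _ t2 _ h
        exact Fin.ext (hω'.pow_inj t1.isLt t2.isLt h)
    exact h1.trans ((Multiset.toFinset_card_le _).trans ((Q v).card_roots'))
  -- injectivity of vecMul
  have hinj : Function.Injective A.vecMulLinear := by
    rw [← LinearMap.ker_eq_bot, eq_bot_iff]
    intro v hv
    simp only [LinearMap.mem_ker, Matrix.vecMulLinear_apply] at hv
    have hQv : Q v = 0 := by
      by_contra hQv
      have := hroots v hQv
      have hall : Finset.univ.filter (fun t : Fin n => A.vecMul v t = 0) = Finset.univ := by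
        refine Finset.filter_true_of_mem fun t _ => ?_
        exact congrFun hv t
      rw [hall] at this
      simp only [Finset.card_univ, Fintype.card_fin] at this
      have := hQdeg v
      omega
    have : ∀ j : Fin r, v j = 0 := by
      intro j
      have := hQcoeff v (j : ℕ)
      rw [hQv] at this
      simpa [j.isLt] using this.symm
    simpa using (funext this : v = 0)
  have hspan : Submodule.span F (Set.range A) = LinearMap.range A.vecMulLinear :=
    (range_vecMulLinear A).symm
  refine ⟨?_, ?_, ?_⟩
  · rw [hspan, LinearMap.finrank_range_of_inj hinj]
    simp [Module.finrank_fin_fun]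
  · intro c hc hc0
    rw [hspan] at hc
    obtain ⟨v, rfl⟩ := hc
    simp only [Matrix.vecMulLinear_apply] at hc0 ⊢
    have hv : v ≠ 0 := by rintro rfl; exact hc0 (by simp)
    have hQv : Q v ≠ 0 := by
      intro h
      apply hv
      funext j
      have := hQcoeff v (j : ℕ)
      rw [h] at this
      simpa [j.isLt] using this.symm
    have h1 := hroots v hQv
    have h2 := hQdeg v
    rw [hnorm]
    omega
  · -- the extremal codeword
    set q : Polynomial F := ∏ s ∈ Finset.range (r - 1),
      (Polynomial.X - Polynomial.C (ω' ^ (s + 1))) with hq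
    have hqmonic : q.Monic := Polynomial.monic_prod_of_monic _ _
      fun s _ => Polynomial.monic_X_sub_C _
    have hqdeg : q.natDegree = r - 1 := by
      rw [hq, Polynomial.natDegree_prod_of_monic _ _ fun s _ => Polynomial.monic_X_sub_C _,
        Finset.sum_congr rfl fun x _ => Polynomial.natDegree_X_sub_C _]
      simp
    set v : Fin r → F := fun j => q.coeff (j : ℕ) with hvdef
    have hQveq : Q v = q := by
      apply Polynomial.ext
      intro m
      rw [hQcoeff]
      split_ifs with h
      · rfl
      · symm
        apply Polynomial.coeff_eq_zero_of_natDegree_lt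
        omega
    refine ⟨A.vecMul v, ?_, ?_, ?_⟩
    · rw [hspan]
      exact ⟨v, rfl⟩
    · intro h
      have h0 : A.vecMul v ⟨0, hn⟩ = 0 := congrFun h _
      rw [key] at h0
      simp only [mul_zero, pow_zero, one_mul, hQveq] at h0
      rw [hq, Polynomial.eval_prod] at h0
      obtain ⟨s, hs, hz0⟩ := Finset.prod_eq_zero_iff.mp h0
      simp only [Polynomial.eval_sub, Polynomial.eval_X, Polynomial.eval_C] at hz0
      have : ω' ^ (s + 1) = 1 := by linear_combination -hz0
      exact hω'.pow_ne_one_of_pos_of_lt (Nat.succ_ne_zero s)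
        (by simp only [Finset.mem_range] at hs; omega) this
    · rw [hnorm]
      have hcard : (Finset.univ.filter (fun t : Fin n => A.vecMul v t = 0)).card = r - 1 := by
        rw [← Finset.card_range (r - 1)]
        symm
        apply Finset.card_bij (fun s hs => (⟨s + 1, by
          simp only [Finset.mem_range] at hs; omega⟩ : Fin n))
        · intro s hs
          simp only [Finset.mem_range] at hs
          simp only [Finset.mem_filter, Finset.mem_univ, true_and]
          rw [hzero, hQveq, hq, Polynomial.eval_prod]
          apply Finset.prod_eq_zero (Finset.mem_range.mpr hs)
          simp
        · intro s1 hs1 s2 hs2 h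
          have := congrArg Fin.val h
          simp only at this
          omega
        · intro t ht
          simp only [Finset.mem_filter, Finset.mem_univ, true_and] at ht
          rw [hzero, hQveq, hq, Polynomial.eval_prod] at ht
          obtain ⟨s, hs, hz⟩ := Finset.prod_eq_zero_iff.mp ht
          simp only [Finset.mem_range] at hs
          simp only [Polynomial.eval_sub, Polynomial.eval_X, Polynomial.eval_C,
            sub_eq_zero] at hz
          have hteq : (t : ℕ) = s + 1 :=
            hω'.pow_inj t.isLt (by omega) hz
          exact ⟨s, Finset.mem_range.mpr hs, Fin.ext hteq.symm⟩
      rw [hcard]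
      omega
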